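/- Let Q be a bounded quasinilpotent operator on a complex Banach space X. Then the function z ↦ N_z := sup_{n ≥ 1} ‖(I + zQ)^n‖ is uniformly bounded on every closed triangle contained in the open interior of B_Q; in particular, on the closed triangle with vertices v₁, v₂, v₃ ∈ B_Q, N_z ≤ N_{v₁}·N_{v₂}·N_{v₃} for all z in the triangle. -/
import Mathlib

open Finset in
lemma binom_pow_bound {A : Type*} [NormedRing A] [NormOneClass A] [NormedAlgebra ℂ A]
    (u w : A) (huw : Commute u w) (a b : ℝ) (ha : 0 ≤ a) (hb : 0 ≤ b) (hab : a + b = 1)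
    (M K : ℝ) (hu : ∀ i : ℕ, ‖u ^ i‖ ≤ M) (hw : ∀ i : ℕ, ‖w ^ i‖ ≤ K) (n : ℕ) :
    ‖((a : ℂ) • u + (b : ℂ) • w) ^ n‖ ≤ M * K := by
  have hM : 0 ≤ M := le_trans (norm_nonneg _) (hu 0)
  have hK : 0 ≤ K := le_trans (norm_nonneg _) (hw 0)
  have hc : Commute ((a : ℂ) • u) ((b : ℂ) • w) := (huw.smul_left _).smul_right _
  rw [hc.add_pow]
  calc ‖∑ m ∈ range (n + 1), ((a:ℂ)•u) ^ m * ((b:ℂ)•w) ^ (n - m) * (n.choose m : A)‖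
      ≤ ∑ m ∈ range (n + 1), a ^ m * b ^ (n - m) * (n.choose m) * (M * K) := by
        refine norm_sum_le_of_le _ fun m _ => ?_
        rw [smul_pow, smul_pow]
        calc ‖(a:ℂ)^m • u ^ m * ((b:ℂ)^(n-m) • w ^ (n-m)) * (n.choose m : A)‖
            ≤ ‖(a:ℂ)^m • u ^ m‖ * ‖(b:ℂ)^(n-m) • w ^ (n-m)‖ * ‖(n.choose m : A)‖ := by
              exact le_trans (norm_mul_le _ _) (by gcongr; exact norm_mul_le _ _)
          _ ≤ (a ^ m * M) * (b ^ (n - m) * K) * (n.choose m) := by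
              have h1 : ‖(a:ℂ)^m • u ^ m‖ ≤ a ^ m * M := by
                rw [norm_smul, norm_pow, Complex.norm_real, Real.norm_of_nonneg ha]
                exact mul_le_mul_of_nonneg_left (hu m) (by positivity)
              have h2 : ‖(b:ℂ)^(n-m) • w ^ (n-m)‖ ≤ b ^ (n-m) * K := by
                rw [norm_smul, norm_pow, Complex.norm_real, Real.norm_of_nonneg hb]
                exact mul_le_mul_of_nonneg_left (hw _) (by positivity)
              have h3 : ‖((n.choose m : ℕ) : A)‖ ≤ (n.choose m : ℝ) := by
                simpa using (n.choose m).norm_cast_le (α := A)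
              exact mul_le_mul (mul_le_mul h1 h2 (norm_nonneg _) (by positivity))
                h3 (norm_nonneg _) (by positivity)
          _ = a ^ m * b ^ (n - m) * (n.choose m) * (M * K) := by ring
    _ = (a + b) ^ n * (M * K) := by rw [add_pow]; rw [← sum_mul]
    _ = M * K := by rw [hab, one_pow, one_mul]

theorem powerBound_on_triangle
    {X : Type*} [NormedAddCommGroup X] [NormedSpace ℂ X] [CompleteSpace X]
    (Q : X →L[ℂ] X) (hQ : spectrum ℂ Q = {0})
    (v₁ v₂ v₃ : ℂ) (N₁ N₂ N₃ : ℝ)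
    (h₁ : ∀ n : ℕ, 1 ≤ n → ‖(1 + v₁ • Q) ^ n‖ ≤ N₁)
    (h₂ : ∀ n : ℕ, 1 ≤ n → ‖(1 + v₂ • Q) ^ n‖ ≤ N₂)
    (h₃ : ∀ n : ℕ, 1 ≤ n → ‖(1 + v₃ • Q) ^ n‖ ≤ N₃) :
    ∀ z ∈ convexHull ℝ ({v₁, v₂, v₃} : Set ℂ), ∀ n : ℕ, 1 ≤ n →
      ‖(1 + z • Q) ^ n‖ ≤ N₁ * N₂ * N₃ := by
  -- Q is not a unit
  have hQ0 : ¬ IsUnit Q := by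
    have h0 : (0 : ℂ) ∈ spectrum ℂ Q := by rw [hQ]; rfl
    rw [spectrum.mem_iff, map_zero, zero_sub] at h0
    exact fun h => h0 h.neg
  haveI : Nontrivial X := by
    by_contra h
    rw [not_nontrivial_iff_subsingleton] at h
    haveI : Subsingleton (X →L[ℂ] X) := ⟨fun f g => ContinuousLinearMap.ext fun x => Subsingleton.elim _ _⟩
    exact hQ0 (isUnit_of_subsingleton Q)
  -- 1 is in the spectrum of 1 + v • Q
  have hspec : ∀ v : ℂ, (1 : ℂ) ∈ spectrum ℂ ((1 : X →L[ℂ] X) + v • Q) := by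
    intro v
    rw [spectrum.mem_iff, map_one]
    intro hunit
    have : IsUnit (v • Q) := by
      have heq : (1 : X →L[ℂ] X) - (1 + v • Q) = -(v • Q) := by abel
      rw [heq] at hunit
      simpa using hunit.neg
    rcases eq_or_ne v 0 with rfl | hv
    · rw [zero_smul, isUnit_zero_iff] at this
      haveI := subsingleton_of_zero_eq_one this
      exact hQ0 (isUnit_of_subsingleton Q)
    · apply hQ0
      have h2 : IsUnit ((Units.mk0 v hv) • Q) := by rwa [Units.smul_def]
      exact (isUnit_smul_iff _ _).mp h2
  -- bounds for all powers
  have key : ∀ (v : ℂ) (N : ℝ), (∀ n : ℕ, 1 ≤ n → ‖(1 + v • Q) ^ n‖ ≤ N) →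
      ∀ i : ℕ, ‖((1 : X →L[ℂ] X) + v • Q) ^ i‖ ≤ N := by
    intro v N h i
    have h1N : (1 : ℝ) ≤ N := by
      have := spectrum.norm_le_norm_of_mem (hspec v)
      simpa using this.trans (h 1 le_rfl)
    cases i with
    | zero => simpa using h1N
    | succ i => exact h _ (Nat.le_add_left 1 i)
  intro z hz n hn
  rw [show ({v₁, v₂, v₃} : Set ℂ) = insert v₁ {v₂, v₃} from rfl,
    convexHull_insert ⟨v₂, by simp⟩, convexHull_pair] at hz
  rw [mem_convexJoin] at hz
  obtain ⟨x, hx, w, hw, hzseg⟩ := hz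
  rw [Set.mem_singleton_iff] at hx
  obtain ⟨c, d, hc, hd, hcd, hwz⟩ := hw
  obtain ⟨a, b, ha, hb, hab, hz'⟩ := hzseg
  rw [hx] at hz' 
  -- commutation facts
  have hcomm : ∀ s t : ℂ, Commute ((1 : X →L[ℂ] X) + s • Q) (1 + t • Q) := by
    intro s t
    have : Commute (s • Q) (t • Q) := ((Commute.refl Q).smul_left s).smul_right t
    exact Commute.add_left (Commute.one_left _) ((Commute.one_right _).add_right this)
  -- the middle point
  set W : X →L[ℂ] X := 1 + w • Q with hW
  have hWdecomp : W = (c : ℂ) • (1 + v₂ • Q) + (d : ℂ) • (1 + v₃ • Q) := by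
    have hwz' : w = (c : ℂ) * v₂ + (d : ℂ) * v₃ := by
      rw [← hwz]; push_cast [Complex.real_smul]; ring
    have hcd' : (c : ℂ) + d = 1 := by exact_mod_cast hcd
    rw [hW, hwz']
    match_scalars
    · linear_combination hcd'.symm
    · ring
  have hWpow : ∀ i : ℕ, ‖W ^ i‖ ≤ N₂ * N₃ := by
    rw [hWdecomp]
    exact binom_pow_bound _ _ (hcomm v₂ v₃) c d hc hd hcd N₂ N₃
      (key v₂ N₂ h₂) (key v₃ N₃ h₃)
  have hzdecomp : (1 : X →L[ℂ] X) + z • Q = (a : ℂ) • (1 + v₁ • Q) + (b : ℂ) • W := by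
    have hz2 : z = (a : ℂ) * v₁ + (b : ℂ) * w := by
      rw [← hz']; push_cast [Complex.real_smul]; ring
    have hab' : (a : ℂ) + b = 1 := by exact_mod_cast hab
    rw [hW, hz2]
    match_scalars
    · linear_combination hab'.symm
    · ring
  rw [hzdecomp]
  have hcommW : Commute ((1 : X →L[ℂ] X) + v₁ • Q) W := by
    rw [hW]; exact hcomm v₁ w
  rw [mul_assoc]
  exact binom_pow_bound _ _ hcommW a b ha hb hab N₁ (N₂ * N₃)
    (key v₁ N₁ h₁) hWpow n
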